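/- arXiv:1412.3085 — 4 statements merged into one kernel-verified Lean document; each statement's English description precedes it below -/
import Mathlib

section
/- For every N ≥ 1, ∫_{[−π,π]^N} ∏_{1≤i<j≤N} |e^{iθ_i} − e^{iθ_j}|² dθ_1⋯dθ_N = (2π)^N · N!. -/
open MeasureTheory Real

/-- The squared modulus of the Vandermonde determinant of the points `e^{iθ_k}`:
`Δ(θ) = ∏_{1 ≤ i < j ≤ N} |e^{iθ_i} − e^{iθ_j}|²`. -/
noncomputable def vdm2 {N : ℕ} (θ : Fin N → ℝ) : ℝ :=
  ∏ i : Fin N, ∏ j ∈ Finset.Ioi i,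
    ‖Complex.exp ((θ i : ℂ) * Complex.I) - Complex.exp ((θ j : ℂ) * Complex.I)‖ ^ 2

lemma cube_prod {N : ℕ} (f : Fin N → ℝ → ℂ) :
    ∫ θ in Set.univ.pi (fun _ : Fin N => Set.Icc (-π) π), ∏ k, f k (θ k)
      = ∏ k, ∫ x in Set.Icc (-π) π, f k x := by
  rw [← integral_indicator (MeasurableSet.univ_pi fun _ => measurableSet_Icc)]
  have key : ∀ θ : Fin N → ℝ,
      (Set.univ.pi fun _ : Fin N => Set.Icc (-π) π).indicator (fun θ => ∏ k, f k (θ k)) θ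
        = ∏ k, (Set.Icc (-π) π).indicator (f k) (θ k) := by
    intro θ
    by_cases h : θ ∈ Set.univ.pi fun _ : Fin N => Set.Icc (-π) π
    · rw [Set.indicator_of_mem h]
      exact Finset.prod_congr rfl fun k _ =>
        (Set.indicator_of_mem (h k (Set.mem_univ k)) _).symm
    · rw [Set.indicator_of_notMem h]
      rw [Set.mem_pi] at h
      push_neg at h
      obtain ⟨k, -, hk⟩ := h
      exact (Finset.prod_eq_zero (Finset.mem_univ k) (Set.indicator_of_notMem hk _)).symm
  simp_rw [key]
  rw [MeasureTheory.integral_fintype_prod_volume_eq_prod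
    (f := fun k x => (Set.Icc (-π) π).indicator (f k) x)]
  simp_rw [integral_indicator measurableSet_Icc]

lemma int_exp (m : ℤ) : ∫ x : ℝ in Set.Icc (-π) π, Complex.exp (((m:ℂ) * Complex.I) * x)
    = if m = 0 then ((2*π : ℝ) : ℂ) else 0 := by
  rw [integral_Icc_eq_integral_Ioc,
    ← intervalIntegral.integral_of_le (by linarith [pi_pos] : (-π:ℝ) ≤ π)]
  rcases eq_or_ne m 0 with h | h
  · simp [h, two_mul]
  · rw [if_neg h, integral_exp_mul_complex (by simp [Complex.ext_iff, h] : ((m:ℂ)*Complex.I) ≠ 0)]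
    have h1 : (m:ℂ) * Complex.I * (π:ℂ) = (m:ℤ) * ((π:ℂ) * Complex.I) := by ring
    have h2 : (m:ℂ) * Complex.I * ((-π:ℝ):ℂ) = (-m:ℤ) * ((π:ℂ) * Complex.I) := by
      push_cast; ring
    rw [h1, h2, Complex.exp_int_mul, Complex.exp_int_mul, Complex.exp_pi_mul_I,
      zpow_neg, ← inv_zpow, inv_neg, inv_one, sub_self, zero_div]

lemma reidx {N : ℕ} (g : Fin N → ℂ) (σ : Equiv.Perm (Fin N)) :
    ∏ i : Fin N, g (σ i) ^ (i : ℕ) = ∏ k : Fin N, g k ^ ((σ⁻¹ k : Fin N) : ℕ) := by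
  rw [← Equiv.prod_comp σ (fun k => g k ^ ((σ⁻¹ k : Fin N) : ℕ))]
  exact Finset.prod_congr rfl fun i _ => by rw [Equiv.Perm.inv_def, Equiv.symm_apply_apply]

lemma step_a {N : ℕ} (θ : Fin N → ℝ) :
    ((vdm2 θ : ℝ) : ℂ) =
      (starRingEnd ℂ) ((Matrix.vandermonde fun k => Complex.exp ((θ k : ℂ) * Complex.I)).det) *
        (Matrix.vandermonde fun k => Complex.exp ((θ k : ℂ) * Complex.I)).det := by
  set c : Fin N → ℂ := fun k => Complex.exp ((θ k : ℂ) * Complex.I) with hc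
  have h1 : vdm2 θ = Complex.normSq ((Matrix.vandermonde c).det) := by
    rw [Matrix.det_vandermonde, map_prod Complex.normSq]
    refine Finset.prod_congr rfl fun i _ => ?_
    rw [map_prod Complex.normSq]
    refine Finset.prod_congr rfl fun j _ => ?_
    rw [Complex.sq_norm, ← Complex.normSq_neg, neg_sub]
  rw [h1, Complex.normSq_eq_conj_mul_self]

lemma step_b {N : ℕ} (θ : Fin N → ℝ) :
    (Matrix.vandermonde fun k => Complex.exp ((θ k : ℂ) * Complex.I)).det =
      ∑ σ : Equiv.Perm (Fin N), ((Equiv.Perm.sign σ : ℤ) : ℂ) *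
        ∏ k : Fin N, Complex.exp ((θ k : ℂ) * Complex.I) ^ ((σ⁻¹ k : Fin N) : ℕ) := by
  rw [Matrix.det_apply]
  refine Finset.sum_congr rfl fun σ _ => ?_
  rw [← reidx (fun k => Complex.exp ((θ k : ℂ) * Complex.I)) σ]
  rw [Units.smul_def, zsmul_eq_mul]
  simp [Matrix.vandermonde_apply]

lemma expand {N : ℕ} (θ : Fin N → ℝ) :
    ((vdm2 θ : ℝ) : ℂ) = ∑ τ : Equiv.Perm (Fin N), ∑ σ : Equiv.Perm (Fin N),
      (((Equiv.Perm.sign τ : ℤ) : ℂ) * ((Equiv.Perm.sign σ : ℤ) : ℂ)) *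
        ∏ k : Fin N, Complex.exp
          ((((((σ⁻¹ k : Fin N) : ℕ) : ℤ) - (((τ⁻¹ k : Fin N) : ℕ) : ℤ) : ℤ) : ℂ)
            * Complex.I * (θ k)) := by
  rw [step_a, step_b, map_sum, Finset.sum_mul_sum]
  refine Finset.sum_congr rfl fun τ _ => Finset.sum_congr rfl fun σ _ => ?_
  rw [map_mul, map_prod]
  have hsign : (starRingEnd ℂ) ((Equiv.Perm.sign τ : ℤ) : ℂ) = ((Equiv.Perm.sign τ : ℤ) : ℂ) :=
    map_intCast _ _
  rw [hsign, mul_assoc, ← mul_assoc (((Equiv.Perm.sign τ : ℤ) : ℂ)), mul_comm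
    (((Equiv.Perm.sign τ : ℤ) : ℂ)) (((Equiv.Perm.sign σ : ℤ) : ℂ)), mul_comm
    (((Equiv.Perm.sign σ : ℤ) : ℂ)) (((Equiv.Perm.sign τ : ℤ) : ℂ))]
  rw [mul_mul_mul_comm]
  congr 1
  rw [← Finset.prod_mul_distrib]
  refine Finset.prod_congr rfl fun k _ => ?_
  have hconj : (starRingEnd ℂ) (Complex.exp ((θ k : ℂ) * Complex.I))
      = Complex.exp (-((θ k : ℂ) * Complex.I)) := by
    rw [← Complex.exp_conj, map_mul, Complex.conj_ofReal, Complex.conj_I, mul_neg]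
  rw [map_pow, hconj, ← Complex.exp_nat_mul, ← Complex.exp_nat_mul, ← Complex.exp_add]
  congr 1
  push_cast
  ring

/-- For every `N ≥ 1`,
`∫_{[−π,π]^N} ∏_{i<j} |e^{iθ_i} − e^{iθ_j}|² dθ = (2π)^N · N!`. -/
theorem stmt1 (N : ℕ) (hN : 1 ≤ N) :
    ∫ θ in Set.univ.pi (fun _ : Fin N => Set.Icc (-π) π), vdm2 θ
      = (2 * π) ^ N * (Nat.factorial N : ℝ) := by
  have key : ∫ θ in Set.univ.pi (fun _ : Fin N => Set.Icc (-π) π), ((vdm2 θ : ℝ) : ℂ)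
      = ((2 * π : ℝ) : ℂ) ^ N * (Nat.factorial N : ℂ) := by
    calc ∫ θ in Set.univ.pi (fun _ : Fin N => Set.Icc (-π) π), ((vdm2 θ : ℝ) : ℂ)
        = ∫ θ in Set.univ.pi (fun _ : Fin N => Set.Icc (-π) π),
            ∑ τ : Equiv.Perm (Fin N), ∑ σ : Equiv.Perm (Fin N),
            (((Equiv.Perm.sign τ : ℤ) : ℂ) * ((Equiv.Perm.sign σ : ℤ) : ℂ)) *
              ∏ k : Fin N, Complex.exp
                ((((((σ⁻¹ k : Fin N) : ℕ) : ℤ) - (((τ⁻¹ k : Fin N) : ℕ) : ℤ) : ℤ) : ℂ)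
                  * Complex.I * (θ k)) := by
          exact integral_congr_ae (Filter.Eventually.of_forall fun θ => expand θ)
      _ = ∑ τ : Equiv.Perm (Fin N), ∑ σ : Equiv.Perm (Fin N),
            ∫ θ in Set.univ.pi (fun _ : Fin N => Set.Icc (-π) π),
            (((Equiv.Perm.sign τ : ℤ) : ℂ) * ((Equiv.Perm.sign σ : ℤ) : ℂ)) *
              ∏ k : Fin N, Complex.exp
                ((((((σ⁻¹ k : Fin N) : ℕ) : ℤ) - (((τ⁻¹ k : Fin N) : ℕ) : ℤ) : ℤ) : ℂ)
                  * Complex.I * (θ k)) := by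
          rw [integral_finset_sum]
          · exact Finset.sum_congr rfl fun τ _ => integral_finset_sum _ fun σ _ => by
              apply ContinuousOn.integrableOn_compact
                (isCompact_univ_pi fun _ => isCompact_Icc)
              apply Continuous.continuousOn
              fun_prop
          · intro τ _
            apply integrable_finset_sum
            intro σ _
            apply ContinuousOn.integrableOn_compact
              (isCompact_univ_pi fun _ => isCompact_Icc)
            apply Continuous.continuousOn
            fun_prop
      _ = ((2 * π : ℝ) : ℂ) ^ N * (Nat.factorial N : ℂ) := by
          have hterm : ∀ τ σ : Equiv.Perm (Fin N),
              ∫ θ in Set.univ.pi (fun _ : Fin N => Set.Icc (-π) π),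
              (((Equiv.Perm.sign τ : ℤ) : ℂ) * ((Equiv.Perm.sign σ : ℤ) : ℂ)) *
                ∏ k : Fin N, Complex.exp
                  ((((((σ⁻¹ k : Fin N) : ℕ) : ℤ) - (((τ⁻¹ k : Fin N) : ℕ) : ℤ) : ℤ) : ℂ)
                    * Complex.I * (θ k))
              = (((Equiv.Perm.sign τ : ℤ) : ℂ) * ((Equiv.Perm.sign σ : ℤ) : ℂ)) *
                ∏ k : Fin N, (if ((((σ⁻¹ k : Fin N) : ℕ) : ℤ) - (((τ⁻¹ k : Fin N) : ℕ) : ℤ)) = 0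
                  then ((2*π : ℝ) : ℂ) else 0) := by
            intro τ σ
            rw [integral_const_mul, cube_prod (fun k x => Complex.exp
              ((((((σ⁻¹ k : Fin N) : ℕ) : ℤ) - (((τ⁻¹ k : Fin N) : ℕ) : ℤ) : ℤ) : ℂ)
                * Complex.I * x))]
            congr 1
            exact Finset.prod_congr rfl fun k _ => int_exp _
          simp_rw [hterm]
          have hdiag : ∀ τ : Equiv.Perm (Fin N),
              ∑ σ : Equiv.Perm (Fin N),
              (((Equiv.Perm.sign τ : ℤ) : ℂ) * ((Equiv.Perm.sign σ : ℤ) : ℂ)) *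
                ∏ k : Fin N, (if ((((σ⁻¹ k : Fin N) : ℕ) : ℤ) - (((τ⁻¹ k : Fin N) : ℕ) : ℤ)) = 0
                  then ((2*π : ℝ) : ℂ) else 0)
              = ((2 * π : ℝ) : ℂ) ^ N := by
            intro τ
            rw [Finset.sum_eq_single_of_mem τ (Finset.mem_univ τ)]
            · rw [Finset.prod_congr rfl (fun k _ => if_pos (by ring)), Finset.prod_const,
                Finset.card_univ, Fintype.card_fin]
              have : ((Equiv.Perm.sign τ : ℤ) : ℂ) * ((Equiv.Perm.sign τ : ℤ) : ℂ) = 1 := by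
                have h := congrArg (Units.val) (Int.units_mul_self (Equiv.Perm.sign τ))
                rw [Units.val_mul, Units.val_one] at h
                exact_mod_cast h
              rw [this, one_mul]
            · intro σ _ hστ
              have : ∃ k, σ⁻¹ k ≠ τ⁻¹ k := by
                by_contra h
                push_neg at h
                exact hστ (inv_injective (Equiv.ext h))
              obtain ⟨k, hk⟩ := this
              rw [Finset.prod_eq_zero (Finset.mem_univ k), mul_zero]
              rw [if_neg]
              intro h
              rw [sub_eq_zero] at h
              exact hk (Fin.val_injective (by exact_mod_cast h))
          simp_rw [hdiag]
          rw [Finset.sum_const, Finset.card_univ, Fintype.card_perm, Fintype.card_fin,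
            nsmul_eq_mul, mul_comm]
  have key' : ((∫ θ in Set.univ.pi (fun _ : Fin N => Set.Icc (-π) π), vdm2 θ : ℝ) : ℂ)
      = ((2 * π : ℝ) : ℂ) ^ N * (Nat.factorial N : ℂ) := by
    rw [← key]; exact (integral_ofReal).symm
  apply Complex.ofReal_injective
  rw [key']
  push_cast
  ring
end

section
/- (Heine identity for Toeplitz integrals.) Let N ≥ 1 and let f : ℝ → ℂ be 2π-periodic and integrable on [−π,π]. Then ∫_{[−π,π]^N} (∏_{k=1}^N f(θ_k)) · ∏_{1≤i<j≤N} |e^{iθ_i} − e^{iθ_j}|² dθ_1⋯dθ_N = (2π)^N · N! · det( t_{j−k} )_{1≤j,k≤N}, where t_m = (1/2π) ∫_{−π}^{π} f(θ) e^{−imθ} dθ is the m-th Fourier coefficient of f. -/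
open MeasureTheory Real

/-- The `m`-th Fourier coefficient of the symbol `f`:
`t_m = (1/2π) ∫_{−π}^{π} f(θ) e^{−imθ} dθ`. -/
noncomputable def toepCoeff (f : ℝ → ℂ) (m : ℤ) : ℂ :=
  ((2 * π : ℝ) : ℂ)⁻¹ * ∫ θ in (-π)..π, f θ * Complex.exp (-(m : ℂ) * Complex.I * (θ : ℂ))

noncomputable def gfun (f : ℝ → ℂ) (m : ℤ) (x : ℝ) : ℂ :=
  f x * Complex.exp (-(m : ℂ) * Complex.I * (x : ℂ))

lemma gnorm (m : ℤ) (x : ℝ) : ‖Complex.exp (-(m : ℂ) * Complex.I * (x : ℂ))‖ = 1 := by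
  rw [show -(m : ℂ) * Complex.I * (x : ℂ) = ((-(m : ℝ) * x : ℝ) : ℂ) * Complex.I by
    push_cast; ring, Complex.norm_exp_ofReal_mul_I]

/-- Pointwise expansion of the integrand into a double sum over permutations. -/
lemma vdm2_expand {N : ℕ} (f : ℝ → ℂ) (θ : Fin N → ℝ) :
    (∏ k : Fin N, f (θ k)) * ((vdm2 θ : ℝ) : ℂ)
      = ∑ σ : Equiv.Perm (Fin N), ∑ τ : Equiv.Perm (Fin N),
          (((Equiv.Perm.sign σ : ℤ) : ℂ) * ((Equiv.Perm.sign τ : ℤ) : ℂ)) *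
            ∏ i : Fin N, gfun f (((τ i : ℕ) : ℤ) - ((σ i : ℕ) : ℤ)) (θ i) := by
  classical
  set e : Fin N → ℂ := fun k => Complex.exp ((θ k : ℂ) * Complex.I) with he
  have key : ∀ z w : ℂ, ((‖z - w‖ : ℝ) : ℂ) ^ 2
      = (w - z) * ((starRingEnd ℂ) w - (starRingEnd ℂ) z) := by
    intro z w
    rw [← Complex.ofReal_pow, Complex.sq_norm, ← Complex.mul_conj, map_sub]
    ring
  have h1 : ((vdm2 θ : ℝ) : ℂ)
      = (Matrix.vandermonde e).det * (Matrix.vandermonde fun k => (starRingEnd ℂ) (e k)).det := by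
    rw [Matrix.det_vandermonde, Matrix.det_vandermonde, ← Finset.prod_mul_distrib]
    unfold vdm2
    push_cast
    refine Finset.prod_congr rfl fun i _ => ?_
    rw [← Finset.prod_mul_distrib]
    exact Finset.prod_congr rfl fun j _ => key _ _
  have hD : (Matrix.vandermonde e).det
      = ∑ σ : Equiv.Perm (Fin N), ((Equiv.Perm.sign σ : ℤ) : ℂ) * ∏ i, e i ^ ((σ i : ℕ)) := by
    rw [← Matrix.det_transpose, Matrix.det_apply']
    simp [Matrix.vandermonde]
  have hD' : (Matrix.vandermonde fun k => (starRingEnd ℂ) (e k)).det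
      = ∑ τ : Equiv.Perm (Fin N),
          ((Equiv.Perm.sign τ : ℤ) : ℂ) * ∏ i, ((starRingEnd ℂ) (e i)) ^ ((τ i : ℕ)) := by
    rw [← Matrix.det_transpose, Matrix.det_apply']
    simp [Matrix.vandermonde]
  have hfac : ∀ (σ τ : Equiv.Perm (Fin N)) (i : Fin N),
      f (θ i) * (e i ^ ((σ i : ℕ)) * ((starRingEnd ℂ) (e i)) ^ ((τ i : ℕ)))
        = gfun f (((τ i : ℕ) : ℤ) - ((σ i : ℕ) : ℤ)) (θ i) := by
    intro σ τ i
    unfold gfun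
    congr 1
    rw [he]
    simp only
    rw [← Complex.exp_conj, map_mul, Complex.conj_ofReal, Complex.conj_I,
      ← Complex.exp_nat_mul, ← Complex.exp_nat_mul, ← Complex.exp_add]
    congr 1
    push_cast
    ring
  rw [h1, hD, hD', Finset.sum_mul_sum, Finset.mul_sum]
  refine Finset.sum_congr rfl fun σ _ => ?_
  rw [Finset.mul_sum]
  refine Finset.sum_congr rfl fun τ _ => ?_
  have hg : (∏ i : Fin N, gfun f (((τ i : ℕ) : ℤ) - ((σ i : ℕ) : ℤ)) (θ i))
      = (∏ i, f (θ i)) *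
        ((∏ i, e i ^ ((σ i : ℕ))) * ∏ i, ((starRingEnd ℂ) (e i)) ^ ((τ i : ℕ))) := by
    rw [← Finset.prod_mul_distrib, ← Finset.prod_mul_distrib]
    exact Finset.prod_congr rfl fun i _ => (hfac σ τ i).symm
  rw [hg]
  ring

/-- The combinatorial identity reindexing the double permutation sum. -/
lemma sum_perm_identity {N : ℕ} (t : ℤ → ℂ) :
    ∑ σ : Equiv.Perm (Fin N), ∑ τ : Equiv.Perm (Fin N),
        (((Equiv.Perm.sign σ : ℤ) : ℂ) * ((Equiv.Perm.sign τ : ℤ) : ℂ)) *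
          ∏ i : Fin N, t (((τ i : ℕ) : ℤ) - ((σ i : ℕ) : ℤ))
      = (N.factorial : ℂ) *
        ∑ pe : Equiv.Perm (Fin N), ((Equiv.Perm.sign pe : ℤ) : ℂ) *
          ∏ i : Fin N, t (((pe i : ℕ) : ℤ) - ((i : ℕ) : ℤ)) := by
  classical
  have hstep : ∀ σ : Equiv.Perm (Fin N),
      (∑ τ : Equiv.Perm (Fin N),
        (((Equiv.Perm.sign σ : ℤ) : ℂ) * ((Equiv.Perm.sign τ : ℤ) : ℂ)) *
          ∏ i : Fin N, t (((τ i : ℕ) : ℤ) - ((σ i : ℕ) : ℤ)))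
      = ∑ pe : Equiv.Perm (Fin N), ((Equiv.Perm.sign pe : ℤ) : ℂ) *
          ∏ i : Fin N, t (((pe i : ℕ) : ℤ) - ((i : ℕ) : ℤ)) := by
    intro σ
    have hsq : ((Equiv.Perm.sign σ : ℤ) : ℂ) * ((Equiv.Perm.sign σ : ℤ) : ℂ) = 1 := by
      rcases Int.units_eq_one_or (Equiv.Perm.sign σ) with h | h <;> simp [h]
    rw [← Equiv.sum_comp (Equiv.mulRight σ)
      (fun τ : Equiv.Perm (Fin N) =>
        (((Equiv.Perm.sign σ : ℤ) : ℂ) * ((Equiv.Perm.sign τ : ℤ) : ℂ)) *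
          ∏ i : Fin N, t (((τ i : ℕ) : ℤ) - ((σ i : ℕ) : ℤ)))]
    refine Finset.sum_congr rfl fun pe _ => ?_
    simp only [Equiv.coe_mulRight, Equiv.Perm.mul_apply, map_mul]
    have hp : (∏ i : Fin N, t (((pe (σ i) : ℕ) : ℤ) - ((σ i : ℕ) : ℤ)))
        = ∏ i : Fin N, t (((pe i : ℕ) : ℤ) - ((i : ℕ) : ℤ)) :=
      Equiv.prod_comp σ (fun j : Fin N => t (((pe j : ℕ) : ℤ) - ((j : ℕ) : ℤ)))
    rw [hp]
    push_cast [Units.val_mul]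
    linear_combination (∏ i : Fin N, t (((pe i : ℕ) : ℤ) - ((i : ℕ) : ℤ))) *
      ((Equiv.Perm.sign pe : ℤ) : ℂ) * hsq
  rw [Finset.sum_congr rfl fun σ _ => hstep σ, Finset.sum_const, Finset.card_univ,
    Fintype.card_perm, Fintype.card_fin, nsmul_eq_mul]

lemma integrableOn_g (f : ℝ → ℂ) (hint : IntegrableOn f (Set.Icc (-π) π)) (m : ℤ) :
    IntegrableOn (gfun f m) (Set.Icc (-π) π) := by
  have h := hint.bdd_mul
    (f := fun x : ℝ => Complex.exp (-(m : ℂ) * Complex.I * (x : ℝ)))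
    ((Complex.continuous_exp.comp (by fun_prop)).aestronglyMeasurable)
    (ae_of_all _ fun x => le_of_eq (gnorm m x))
  exact h.congr (ae_of_all _ fun x => mul_comm _ _)

lemma integral_g (f : ℝ → ℂ) (m : ℤ) :
    ∫ x in Set.Icc (-π) π, gfun f m x = ((2 * π : ℝ) : ℂ) * toepCoeff f m := by
  have hle : (-π : ℝ) ≤ π := by linarith [pi_pos]
  rw [integral_Icc_eq_integral_Ioc, ← intervalIntegral.integral_of_le hle, toepCoeff,
    ← mul_assoc, mul_inv_cancel₀, one_mul]
  · rfl
  · simpa using pi_ne_zero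

lemma indicator_pi_prod {N : ℕ} (S : Set ℝ) (g : Fin N → ℝ → ℂ) :
    (Set.univ.pi fun _ : Fin N => S).indicator (fun θ => ∏ i, g i (θ i))
      = fun θ => ∏ i, S.indicator (g i) (θ i) := by
  funext θ
  by_cases h : θ ∈ Set.univ.pi fun _ : Fin N => S
  · rw [Set.indicator_of_mem h]
    exact Finset.prod_congr rfl fun i _ =>
      (Set.indicator_of_mem (h i trivial) _).symm
  · rw [Set.indicator_of_notMem h]
    have h' : ¬ ∀ i, θ i ∈ S := by simpa [Set.mem_pi] using h
    push_neg at h'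
    obtain ⟨i, hi⟩ := h'
    exact (Finset.prod_eq_zero (Finset.mem_univ i) (Set.indicator_of_notMem hi _)).symm

/-- Heine identity for Toeplitz integrals: for `N ≥ 1` and `f : ℝ → ℂ`
`2π`-periodic and integrable on `[−π,π]`,
`∫_{[−π,π]^N} (∏_k f(θ_k)) ∏_{i<j} |e^{iθ_i} − e^{iθ_j}|² dθ = (2π)^N N! det(t_{j−k})_{1≤j,k≤N}`. -/
theorem stmt2 (N : ℕ) (hN : 1 ≤ N) (f : ℝ → ℂ)
    (hper : Function.Periodic f (2 * π))
    (hint : IntegrableOn f (Set.Icc (-π) π)) :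
    ∫ θ in Set.univ.pi (fun _ : Fin N => Set.Icc (-π) π),
        (∏ k : Fin N, f (θ k)) * ((vdm2 θ : ℝ) : ℂ)
      = (((2 * π) ^ N * (Nat.factorial N : ℝ) : ℝ) : ℂ) *
        Matrix.det (Matrix.of fun j k : Fin N => toepCoeff f ((j.val : ℤ) - (k.val : ℤ))) := by
  classical
  set S : Set (Fin N → ℝ) := Set.univ.pi fun _ : Fin N => Set.Icc (-π) π with hS
  have hSmeas : MeasurableSet S := MeasurableSet.univ_pi fun _ => measurableSet_Icc
  have hprodS : ∀ m : Fin N → ℤ,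
      IntegrableOn (fun θ : Fin N → ℝ => ∏ i, gfun f (m i) (θ i)) S := by
    intro m
    rw [← integrable_indicator_iff hSmeas, hS, indicator_pi_prod]
    exact Integrable.fintype_prod fun i =>
      (integrableOn_g f hint (m i)).integrable_indicator measurableSet_Icc
  have hSint : ∀ m : Fin N → ℤ,
      ∫ θ in S, ∏ i, gfun f (m i) (θ i)
        = ∏ i, ((2 * π : ℝ) : ℂ) * toepCoeff f (m i) := by
    intro m
    rw [← integral_indicator hSmeas, hS, indicator_pi_prod,
      MeasureTheory.integral_fintype_prod_volume_eq_prod (ι := Fin N)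
        (fun i (x : ℝ) => (Set.Icc (-π) π).indicator (gfun f (m i)) x)]
    exact Finset.prod_congr rfl fun i _ => by
      rw [integral_indicator measurableSet_Icc, integral_g]
  have hexp : ∫ θ in S, (∏ k : Fin N, f (θ k)) * ((vdm2 θ : ℝ) : ℂ)
      = ∑ σ : Equiv.Perm (Fin N), ∑ τ : Equiv.Perm (Fin N),
          (((Equiv.Perm.sign σ : ℤ) : ℂ) * ((Equiv.Perm.sign τ : ℤ) : ℂ)) *
            ∫ θ in S, ∏ i : Fin N, gfun f (((τ i : ℕ) : ℤ) - ((σ i : ℕ) : ℤ)) (θ i) := by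
    rw [integral_congr_ae (ae_of_all _ fun θ => vdm2_expand f θ),
      integral_finset_sum _ (fun σ _ => integrable_finset_sum _ fun τ _ =>
        ((hprodS fun i => ((τ i : ℕ) : ℤ) - ((σ i : ℕ) : ℤ)).const_mul _))]
    refine Finset.sum_congr rfl fun σ _ => ?_
    rw [integral_finset_sum _ (fun τ _ =>
      ((hprodS fun i => ((τ i : ℕ) : ℤ) - ((σ i : ℕ) : ℤ)).const_mul _))]
    exact Finset.sum_congr rfl fun τ _ => integral_const_mul _ _
  rw [hexp]
  have hterm : ∀ σ τ : Equiv.Perm (Fin N),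
      (((Equiv.Perm.sign σ : ℤ) : ℂ) * ((Equiv.Perm.sign τ : ℤ) : ℂ)) *
          ∫ θ in S, ∏ i : Fin N, gfun f (((τ i : ℕ) : ℤ) - ((σ i : ℕ) : ℤ)) (θ i)
        = (((2 * π : ℝ) : ℂ)) ^ N *
          ((((Equiv.Perm.sign σ : ℤ) : ℂ) * ((Equiv.Perm.sign τ : ℤ) : ℂ)) *
            ∏ i : Fin N, toepCoeff f (((τ i : ℕ) : ℤ) - ((σ i : ℕ) : ℤ))) := by
    intro σ τ
    rw [hSint, Finset.prod_mul_distrib, Finset.prod_const, Finset.card_univ, Fintype.card_fin]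
    ring
  calc (∑ σ : Equiv.Perm (Fin N), ∑ τ : Equiv.Perm (Fin N),
          (((Equiv.Perm.sign σ : ℤ) : ℂ) * ((Equiv.Perm.sign τ : ℤ) : ℂ)) *
            ∫ θ in S, ∏ i : Fin N, gfun f (((τ i : ℕ) : ℤ) - ((σ i : ℕ) : ℤ)) (θ i))
      = (((2 * π : ℝ) : ℂ)) ^ N * ∑ σ : Equiv.Perm (Fin N), ∑ τ : Equiv.Perm (Fin N),
          (((Equiv.Perm.sign σ : ℤ) : ℂ) * ((Equiv.Perm.sign τ : ℤ) : ℂ)) *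
            ∏ i : Fin N, toepCoeff f (((τ i : ℕ) : ℤ) - ((σ i : ℕ) : ℤ)) := by
        rw [Finset.mul_sum]
        refine Finset.sum_congr rfl fun σ _ => ?_
        rw [Finset.mul_sum]
        exact Finset.sum_congr rfl fun τ _ => hterm σ τ
    _ = (((2 * π : ℝ) : ℂ)) ^ N * ((N.factorial : ℂ) *
          ∑ pe : Equiv.Perm (Fin N), ((Equiv.Perm.sign pe : ℤ) : ℂ) *
            ∏ i : Fin N, toepCoeff f (((pe i : ℕ) : ℤ) - ((i : ℕ) : ℤ))) := by
        rw [sum_perm_identity (toepCoeff f)]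
    _ = _ := by
        rw [Matrix.det_apply']
        simp only [Matrix.of_apply]
        push_cast
        ring
end

section
/- Let N ≥ 1, R ≥ 0, and real numbers 0 ≤ b_0 < a_1 < b_1 < a_2 < ⋯ < a_R < b_R ≤ π. Set I = [−b_0,b_0] ∪ ⋃_{r=1}^R ([a_r,b_r] ∪ [−b_r,−a_r]). Then ((2π)^N N!)^{-1} ∫_{I^N} ∏_{1≤i<j≤N} |e^{iθ_i} − e^{iθ_j}|² dθ_1⋯dθ_N = det C, where C is the N×N matrix with entries C_{i,j} = (b_0/π)·sinc((j−i)b_0) + Σ_{r=1}^R [ (b_r/π)·sinc((j−i)b_r) − (a_r/π)·sinc((j−i)a_r) ]. -/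
open MeasureTheory Real

/-- The cardinal sine: `sinc x = sin x / x` for `x ≠ 0`, and `sinc 0 = 1`. -/
noncomputable def sinc (x : ℝ) : ℝ := if x = 0 then 1 else Real.sin x / x

namespace Stmt4Aux

noncomputable def eF (c : ℝ) (t : ℝ) : ℂ := Complex.exp ((c : ℂ) * (t : ℂ) * Complex.I)

lemma eF_cont (c : ℝ) : Continuous (eF c) := by
  unfold eF; fun_prop

lemma x_mul_sinc {c : ℝ} (hc : c ≠ 0) (x : ℝ) : x * _root_.sinc (c * x) = Real.sin (c * x) / c := by
  rcases eq_or_ne x 0 with h | h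
  · simp [h, _root_.sinc]
  · rw [_root_.sinc, if_neg (mul_ne_zero hc h)]
    field_simp

lemma pairInt (c u v : ℝ) :
    ((∫ t in (-v)..(-u), eF c t) + ∫ t in u..v, eF c t)
      = ((2 * (v * _root_.sinc (c * v) - u * _root_.sinc (c * u)) : ℝ) : ℂ) := by
  rcases eq_or_ne c 0 with hc | hc
  · simp [eF, hc, _root_.sinc]
    push_cast
    ring
  · have hc' : (c : ℂ) * Complex.I ≠ 0 :=
      mul_ne_zero (Complex.ofReal_ne_zero.mpr hc) Complex.I_ne_zero
    have key : ∀ p q : ℝ, (∫ t in p..q, eF c t)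
        = (Complex.exp ((c:ℂ)*Complex.I*q) - Complex.exp ((c:ℂ)*Complex.I*p)) / ((c:ℂ)*Complex.I) := by
      intro p q
      rw [← integral_exp_mul_complex hc']
      refine intervalIntegral.integral_congr fun t _ => ?_
      unfold eF; congr 1; ring
    have e1 : ∀ x : ℝ, Complex.exp ((c:ℂ)*Complex.I*(x:ℂ))
        = (Real.cos (c*x) : ℂ) + (Real.sin (c*x) : ℂ) * Complex.I := by
      intro x
      rw [show (c:ℂ)*Complex.I*(x:ℂ) = ((c*x : ℝ):ℂ) * Complex.I by push_cast; ring,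
        Complex.exp_mul_I]
      norm_cast
    rw [key, key, e1, e1, e1, e1, x_mul_sinc hc, x_mul_sinc hc]
    have hcC : (c:ℂ) ≠ 0 := Complex.ofReal_ne_zero.mpr hc
    push_cast
    simp only [mul_neg, Complex.cos_neg, Complex.sin_neg]
    field_simp
    ring


lemma eF_ii (c p q : ℝ) : IntervalIntegrable (eF c) volume p q :=
  (eF_cont c).intervalIntegrable p q

lemma icc_eq (c u v : ℝ) (h : u ≤ v) :
    ∫ t in Set.Icc u v, eF c t = ∫ t in u..v, eF c t := by
  rw [MeasureTheory.integral_Icc_eq_integral_Ioc, intervalIntegral.integral_of_le h]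

lemma symInt (c v : ℝ) (hv : 0 ≤ v) :
    ∫ t in Set.Icc (-v) v, eF c t = ((2 * (v * _root_.sinc (c * v)) : ℝ) : ℂ) := by
  rw [icc_eq c _ _ (by linarith),
    ← intervalIntegral.integral_add_adjacent_intervals (eF_ii c (-v) 0) (eF_ii c 0 v)]
  have := pairInt c 0 v
  rw [neg_zero] at this
  rw [this]
  norm_num [_root_.sinc]

lemma pairIcc' (c u v : ℝ) (h : u ≤ v) :
    ((∫ t in Set.Icc u v, eF c t) + ∫ t in Set.Icc (-v) (-u), eF c t)
      = ((2 * (v * _root_.sinc (c * v) - u * _root_.sinc (c * u)) : ℝ) : ℂ) := by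
  rw [icc_eq c _ _ h, icc_eq c _ _ (by linarith), add_comm]
  exact pairInt c u v

lemma disj_Icc {p q r s : ℝ} (h : q < r) : Disjoint (Set.Icc p q) (Set.Icc r s) := by
  rw [Set.disjoint_left]
  rintro x ⟨_, h1⟩ ⟨h2, _⟩
  linarith


lemma F_eq (R : ℕ) (b0 : ℝ) (a b : Fin R → ℝ)
    (hb0 : 0 ≤ b0)
    (hb0a : ∀ r : Fin R, b0 < a r)
    (hab : ∀ r : Fin R, a r < b r)
    (hchain : ∀ r s : Fin R, r < s → b r < a s) (c : ℝ) :
    ∫ t in (Set.Icc (-b0) b0 ∪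
        ⋃ r : Fin R, (Set.Icc (a r) (b r) ∪ Set.Icc (-(b r)) (-(a r)))), eF c t
      = ((2 * (b0 * _root_.sinc (c * b0) +
          ∑ r : Fin R, (b r * _root_.sinc (c * b r) - a r * _root_.sinc (c * a r))) : ℝ) : ℂ) := by
  have ha0 : ∀ r, 0 < a r := fun r => lt_of_le_of_lt hb0 (hb0a r)
  set J : Fin R → Set ℝ := fun r => Set.Icc (a r) (b r) ∪ Set.Icc (-(b r)) (-(a r)) with hJ
  have hJmeas : ∀ r, MeasurableSet (J r) :=
    fun r => measurableSet_Icc.union measurableSet_Icc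
  have hJcomp : ∀ r, IsCompact (J r) := fun r => (isCompact_Icc).union isCompact_Icc
  have hint : ∀ s : Set ℝ, IsCompact s → IntegrableOn (eF c) s volume :=
    fun s hs => (eF_cont c).continuousOn.integrableOn_compact hs
  have hJdisj : Pairwise (Function.onFun Disjoint J) := by
    intro r s hrs
    have key : ∀ r s : Fin R, r < s → Disjoint (J r) (J s) := by
      intro r s h
      have h1 : b r < a s := hchain r s h
      simp only [hJ, Set.disjoint_union_left, Set.disjoint_union_right]
      refine ⟨⟨disj_Icc h1, ?_⟩, ⟨?_, ?_⟩⟩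
      · exact disj_Icc (show -(a r) < a s by have := ha0 r; have := ha0 s; linarith)
      · exact (disj_Icc (show -(a s) < a r by have := ha0 r; have := ha0 s; linarith)).symm
      · exact (disj_Icc (show -(a s) < -(b r) by linarith)).symm
    rcases lt_or_gt_of_ne hrs with h | h
    · exact key r s h
    · exact (key s r h).symm
  have hAdisj : Disjoint (Set.Icc (-b0) b0) (⋃ r, J r) := by
    rw [Set.disjoint_iUnion_right]
    intro r
    simp only [hJ, Set.disjoint_union_right]
    exact ⟨disj_Icc (hb0a r), (disj_Icc (show -(a r) < -b0 by have := hb0a r; linarith)).symm⟩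
  rw [MeasureTheory.setIntegral_union hAdisj (MeasurableSet.iUnion hJmeas)
      (hint _ isCompact_Icc) (hint _ (isCompact_iUnion hJcomp)),
    MeasureTheory.integral_iUnion hJmeas hJdisj (hint _ (isCompact_iUnion hJcomp)),
    tsum_fintype, symInt c b0 hb0]
  have hr : ∀ r : Fin R, ∫ t in J r, eF c t
      = ((2 * (b r * _root_.sinc (c * b r) - a r * _root_.sinc (c * a r)) : ℝ) : ℂ) := by
    intro r
    show (∫ t in Set.Icc (a r) (b r) ∪ Set.Icc (-(b r)) (-(a r)), eF c t) = _
    rw [MeasureTheory.setIntegral_union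
        ((disj_Icc (show -(a r) < a r by linarith [ha0 r])).symm)
        measurableSet_Icc (hint _ isCompact_Icc) (hint _ isCompact_Icc)]
    exact pairIcc' c (a r) (b r) (le_of_lt (hab r))
  rw [Finset.sum_congr rfl fun r _ => hr r]
  push_cast
  rw [← Finset.mul_sum]
  ring


lemma piFactor {N : ℕ} {I : Set ℝ} (hI : MeasurableSet I) (h : Fin N → ℝ → ℂ) :
    ∫ θ in Set.univ.pi (fun _ : Fin N => I), ∏ k, h k (θ k)
      = ∏ k, ∫ t in I, h k t := by
  rw [← MeasureTheory.integral_indicator (MeasurableSet.univ_pi fun _ => hI)]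
  have heq : (Set.univ.pi fun _ : Fin N => I).indicator (fun θ => ∏ k, h k (θ k))
      = fun θ => ∏ k, (I.indicator (h k)) (θ k) := by
    funext θ
    by_cases hθ : θ ∈ Set.univ.pi fun _ : Fin N => I
    · rw [Set.indicator_of_mem hθ]
      exact Finset.prod_congr rfl fun k _ =>
        (Set.indicator_of_mem (hθ k (Set.mem_univ k)) _).symm
    · rw [Set.indicator_of_notMem hθ]
      rw [Set.mem_univ_pi] at hθ
      push_neg at hθ
      obtain ⟨k, hk⟩ := hθ
      exact (Finset.prod_eq_zero (Finset.mem_univ k) (Set.indicator_of_notMem hk _)).symm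
  rw [heq, MeasureTheory.integral_fintype_prod_volume_eq_prod (f := fun k => I.indicator (h k))]
  exact Finset.prod_congr rfl fun k _ => MeasureTheory.integral_indicator hI


lemma hzz (t : ℝ) (p q : ℕ) :
    Complex.exp ((t:ℂ) * Complex.I) ^ p *
      ((starRingEnd ℂ) (Complex.exp ((t:ℂ) * Complex.I))) ^ q = eF ((p:ℝ) - (q:ℝ)) t := by
  rw [← Complex.exp_conj, map_mul, Complex.conj_I, Complex.conj_ofReal,
    ← Complex.exp_nat_mul, ← Complex.exp_nat_mul, ← Complex.exp_add, eF]
  congr 1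
  push_cast
  ring

lemma point {N : ℕ} (θ : Fin N → ℝ) :
    (vdm2 θ : ℂ) = ∑ σ : Equiv.Perm (Fin N), ∑ τ : Equiv.Perm (Fin N),
      ((Equiv.Perm.sign σ : ℤ) : ℂ) * ((Equiv.Perm.sign τ : ℤ) : ℂ) *
        ∏ k : Fin N, eF (((σ k : ℕ) : ℝ) - ((τ k : ℕ) : ℝ)) (θ k) := by
  classical
  set z : Fin N → ℂ := fun k => Complex.exp ((θ k : ℂ) * Complex.I) with hz
  have h1 : (vdm2 θ : ℂ)
      = (Matrix.vandermonde z).det * (starRingEnd ℂ) ((Matrix.vandermonde z).det) := by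
    rw [Matrix.det_vandermonde]
    rw [show vdm2 θ = Complex.normSq (∏ i : Fin N, ∏ j ∈ Finset.Ioi i, (z j - z i)) from ?_]
    · exact (Complex.mul_conj _).symm
    · rw [map_prod]
      unfold vdm2
      refine Finset.prod_congr rfl fun i _ => ?_
      rw [map_prod]
      refine Finset.prod_congr rfl fun j _ => ?_
      rw [← Complex.sq_norm, norm_sub_rev]
  have key : ∀ σ τ : Equiv.Perm (Fin N),
      (((Equiv.Perm.sign σ : ℤ) : ℂ) * ∏ i : Fin N, z (σ i) ^ (i : ℕ)) *
        (starRingEnd ℂ) (((Equiv.Perm.sign τ : ℤ) : ℂ) * ∏ i : Fin N, z (τ i) ^ (i : ℕ))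
      = ((Equiv.Perm.sign σ : ℤ) : ℂ) * ((Equiv.Perm.sign τ : ℤ) : ℂ) *
          ∏ k : Fin N, eF ((((σ⁻¹ k : Fin N) : ℕ) : ℝ) - (((τ⁻¹ k : Fin N) : ℕ) : ℝ)) (θ k) := by
    intro σ τ
    rw [map_mul, map_prod, map_intCast]
    have r1 : ∏ i : Fin N, z (σ i) ^ (i : ℕ) = ∏ k : Fin N, z k ^ ((σ⁻¹ k : Fin N) : ℕ) := by
      rw [← Equiv.prod_comp σ (fun k => z k ^ ((σ⁻¹ k : Fin N) : ℕ))]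
      exact Finset.prod_congr rfl fun i _ => by rw [show σ⁻¹ (σ i) = i from σ.symm_apply_apply i]
    have r2 : ∏ i : Fin N, (starRingEnd ℂ) (z (τ i) ^ (i : ℕ))
        = ∏ k : Fin N, ((starRingEnd ℂ) (z k)) ^ ((τ⁻¹ k : Fin N) : ℕ) := by
      rw [← Equiv.prod_comp τ (fun k => ((starRingEnd ℂ) (z k)) ^ ((τ⁻¹ k : Fin N) : ℕ))]
      exact Finset.prod_congr rfl fun i _ => by rw [show τ⁻¹ (τ i) = i from τ.symm_apply_apply i, map_pow]
    rw [r1, r2, mul_mul_mul_comm, ← Finset.prod_mul_distrib]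
    congr 1
    exact Finset.prod_congr rfl fun k _ => hzz (θ k) _ _
  rw [h1, Matrix.det_apply', map_sum, Finset.sum_mul_sum]
  simp only [Matrix.vandermonde_apply]
  rw [Finset.sum_congr rfl fun σ _ => Finset.sum_congr rfl fun τ _ => key σ τ]
  rw [← Equiv.sum_comp (Equiv.inv (Equiv.Perm (Fin N)))
      (fun σ => ∑ τ : Equiv.Perm (Fin N),
        ((Equiv.Perm.sign σ : ℤ) : ℂ) * ((Equiv.Perm.sign τ : ℤ) : ℂ) *
          ∏ k : Fin N, eF (((σ k : ℕ) : ℝ) - ((τ k : ℕ) : ℝ)) (θ k))]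
  refine Finset.sum_congr rfl fun σ _ => ?_
  rw [← Equiv.sum_comp (Equiv.inv (Equiv.Perm (Fin N)))
      (fun τ => ((Equiv.Perm.sign (Equiv.inv (Equiv.Perm (Fin N)) σ) : ℤ) : ℂ) *
        ((Equiv.Perm.sign τ : ℤ) : ℂ) *
          ∏ k : Fin N, eF ((((Equiv.inv (Equiv.Perm (Fin N)) σ) k : ℕ) : ℝ) - ((τ k : ℕ) : ℝ)) (θ k))]
  refine Finset.sum_congr rfl fun τ _ => ?_
  simp [Equiv.Perm.sign_inv]


lemma sum_det {N : ℕ} (M : Matrix (Fin N) (Fin N) ℂ) :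
    ∑ σ : Equiv.Perm (Fin N), ∑ τ : Equiv.Perm (Fin N),
      ((Equiv.Perm.sign σ : ℤ) : ℂ) * ((Equiv.Perm.sign τ : ℤ) : ℂ) * ∏ k : Fin N, M (σ k) (τ k)
    = (N.factorial : ℂ) * M.det := by
  classical
  have inner : ∀ τ : Equiv.Perm (Fin N),
      ∑ σ : Equiv.Perm (Fin N),
        ((Equiv.Perm.sign σ : ℤ) : ℂ) * ((Equiv.Perm.sign τ : ℤ) : ℂ) *
          ∏ k : Fin N, M (σ k) (τ k) = M.det := by
    intro τ
    rw [Matrix.det_apply']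
    rw [← Equiv.sum_comp (Equiv.mulRight τ)
      (fun σ => ((Equiv.Perm.sign σ : ℤ) : ℂ) * ((Equiv.Perm.sign τ : ℤ) : ℂ) *
        ∏ k : Fin N, M (σ k) (τ k))]
    refine Finset.sum_congr rfl fun ρ _ => ?_
    simp only [Equiv.coe_mulRight]
    have hp : ∏ k : Fin N, M ((ρ * τ) k) (τ k) = ∏ i : Fin N, M (ρ i) i := by
      rw [← Equiv.prod_comp τ (fun i => M (ρ i) i)]
      rfl
    rw [hp]
    rcases Int.units_eq_one_or (Equiv.Perm.sign τ) with h | h <;>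
      simp [Equiv.Perm.sign_mul, h]
  rw [Finset.sum_comm, Finset.sum_congr rfl fun τ _ => inner τ, Finset.sum_const, Finset.card_univ,
    Fintype.card_perm, Fintype.card_fin, nsmul_eq_mul]

end Stmt4Aux

/-- For `N ≥ 1`, `R ≥ 0`, and `0 ≤ b_0 < a_1 < b_1 < ⋯ < a_R < b_R ≤ π`, with
`I = [−b_0,b_0] ∪ ⋃_{r=1}^R ([a_r,b_r] ∪ [−b_r,−a_r])`, one has
`((2π)^N N!)⁻¹ ∫_{I^N} ∏_{i<j} |e^{iθ_i} − e^{iθ_j}|² dθ = det C` with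
`C_{i,j} = (b_0/π) _root_.sinc((j−i)b_0) + Σ_r [(b_r/π) _root_.sinc((j−i)b_r) − (a_r/π) _root_.sinc((j−i)a_r)]`. -/
theorem stmt4 (N : ℕ) (hN : 1 ≤ N) (R : ℕ) (b0 : ℝ) (a b : Fin R → ℝ)
    (hb0 : 0 ≤ b0) (hb0π : b0 ≤ π)
    (hb0a : ∀ r : Fin R, b0 < a r)
    (hab : ∀ r : Fin R, a r < b r)
    (hchain : ∀ r s : Fin R, r < s → b r < a s)
    (hbπ : ∀ r : Fin R, b r ≤ π) :
    ((2 * π) ^ N * (Nat.factorial N : ℝ))⁻¹ *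
        ∫ θ in Set.univ.pi (fun _ : Fin N =>
            Set.Icc (-b0) b0 ∪ ⋃ r : Fin R, (Set.Icc (a r) (b r) ∪ Set.Icc (-(b r)) (-(a r)))),
          vdm2 θ
      = Matrix.det (Matrix.of fun i j : Fin N =>
          (b0 / π) * _root_.sinc (((j.val : ℝ) - (i.val : ℝ)) * b0) +
          ∑ r : Fin R,
            ((b r / π) * _root_.sinc (((j.val : ℝ) - (i.val : ℝ)) * b r) -
             (a r / π) * _root_.sinc (((j.val : ℝ) - (i.val : ℝ)) * a r))) := by
  classical
  have hπ : (π : ℝ) ≠ 0 := Real.pi_ne_zero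
  set Is : Set ℝ := Set.Icc (-b0) b0 ∪
      ⋃ r : Fin R, (Set.Icc (a r) (b r) ∪ Set.Icc (-(b r)) (-(a r))) with hIs
  have hIsMeas : MeasurableSet Is :=
    measurableSet_Icc.union
      (MeasurableSet.iUnion fun r => measurableSet_Icc.union measurableSet_Icc)
  have hIsComp : IsCompact Is :=
    isCompact_Icc.union (isCompact_iUnion fun r => isCompact_Icc.union isCompact_Icc)
  have hPiComp : IsCompact (Set.univ.pi fun _ : Fin N => Is) :=
    isCompact_univ_pi fun _ => hIsComp
  set G : ℝ → ℝ := fun c =>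
    2 * (b0 * _root_.sinc (c * b0) + ∑ r : Fin R, (b r * _root_.sinc (c * b r) - a r * _root_.sinc (c * a r)))
    with hG
  have hF : ∀ c : ℝ, ∫ t in Is, Stmt4Aux.eF c t = ((G c : ℝ) : ℂ) := fun c =>
    Stmt4Aux.F_eq R b0 a b hb0 hb0a hab hchain c
  have hInt : ∀ σ τ : Equiv.Perm (Fin N),
      IntegrableOn (fun θ : Fin N → ℝ =>
        ((Equiv.Perm.sign σ : ℤ) : ℂ) * ((Equiv.Perm.sign τ : ℤ) : ℂ) *
          ∏ k : Fin N, Stmt4Aux.eF (((σ k : ℕ) : ℝ) - ((τ k : ℕ) : ℝ)) (θ k))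
        (Set.univ.pi fun _ : Fin N => Is) volume := by
    intro σ τ
    refine Continuous.continuousOn ?_ |>.integrableOn_compact hPiComp
    exact continuous_const.mul (continuous_finset_prod _ fun k _ =>
      (Stmt4Aux.eF_cont _).comp (continuous_apply k))
  set Mc : Matrix (Fin N) (Fin N) ℂ :=
    Matrix.of (fun p q : Fin N => ((G (((p : ℕ) : ℝ) - ((q : ℕ) : ℝ)) : ℝ) : ℂ)) with hMc
  have main : (∫ θ in Set.univ.pi (fun _ : Fin N => Is), ((vdm2 θ : ℝ) : ℂ))
      = (N.factorial : ℂ) * Mc.det := by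
    calc ∫ θ in Set.univ.pi (fun _ : Fin N => Is), ((vdm2 θ : ℝ) : ℂ)
        = ∫ θ in Set.univ.pi (fun _ : Fin N => Is),
            ∑ σ : Equiv.Perm (Fin N), ∑ τ : Equiv.Perm (Fin N),
              ((Equiv.Perm.sign σ : ℤ) : ℂ) * ((Equiv.Perm.sign τ : ℤ) : ℂ) *
                ∏ k : Fin N, Stmt4Aux.eF (((σ k : ℕ) : ℝ) - ((τ k : ℕ) : ℝ)) (θ k) := by
          exact MeasureTheory.integral_congr_ae (Filter.Eventually.of_forall
            fun θ => Stmt4Aux.point θ)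
      _ = ∑ σ : Equiv.Perm (Fin N), ∑ τ : Equiv.Perm (Fin N),
            ((Equiv.Perm.sign σ : ℤ) : ℂ) * ((Equiv.Perm.sign τ : ℤ) : ℂ) *
              ∏ k : Fin N, Mc (σ k) (τ k) := by
          rw [MeasureTheory.integral_finset_sum _
            (fun σ _ => integrable_finset_sum _ (fun τ _ => hInt σ τ))]
          refine Finset.sum_congr rfl fun σ _ => ?_
          rw [MeasureTheory.integral_finset_sum _ (fun τ _ => hInt σ τ)]
          refine Finset.sum_congr rfl fun τ _ => ?_
          rw [MeasureTheory.integral_const_mul, Stmt4Aux.piFactor hIsMeas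
            (fun k => Stmt4Aux.eF (((σ k : ℕ) : ℝ) - ((τ k : ℕ) : ℝ)))]
          congr 1
          exact Finset.prod_congr rfl fun k _ => hF _
      _ = (N.factorial : ℂ) * Mc.det := Stmt4Aux.sum_det Mc
  -- compute Mc.det
  set Cm : Matrix (Fin N) (Fin N) ℝ := Matrix.of fun i j : Fin N =>
      (b0 / π) * _root_.sinc (((j.val : ℝ) - (i.val : ℝ)) * b0) +
      ∑ r : Fin R,
        ((b r / π) * _root_.sinc (((j.val : ℝ) - (i.val : ℝ)) * b r) -
         (a r / π) * _root_.sinc (((j.val : ℝ) - (i.val : ℝ)) * a r)) with hCm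
  have hGC : ∀ c : ℝ, G c = 2 * π * ((b0 / π) * _root_.sinc (c * b0) +
      ∑ r : Fin R, ((b r / π) * _root_.sinc (c * b r) - (a r / π) * _root_.sinc (c * a r))) := by
    intro c
    rw [hG]
    simp only [div_mul_eq_mul_div, ← sub_div, ← Finset.sum_div, ← add_div]
    field_simp
  have hMcCm : Mc = ((2 * π : ℝ) : ℂ) • (Complex.ofRealHom.mapMatrix Cm).transpose := by
    ext p q
    simp only [hMc, hCm, Matrix.of_apply, Matrix.smul_apply, Matrix.transpose_apply,
      RingHom.mapMatrix_apply, Matrix.map_apply, Complex.ofRealHom_eq_coe, smul_eq_mul]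
    rw [hGC (((p : ℕ) : ℝ) - ((q : ℕ) : ℝ))]
    push_cast
    ring
  have hdet : Mc.det = ((2 * π : ℝ) : ℂ) ^ N * ((Cm.det : ℝ) : ℂ) := by
    rw [hMcCm, Matrix.det_smul, Matrix.det_transpose, Fintype.card_fin,
      ← RingHom.map_det]
    rfl
  have hreal : (∫ θ in Set.univ.pi (fun _ : Fin N => Is), vdm2 θ)
      = (2 * π) ^ N * (N.factorial : ℝ) * Cm.det := by
    have := main
    have cast1 : (∫ θ in Set.univ.pi (fun _ : Fin N => Is), ((vdm2 θ : ℝ) : ℂ))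
        = (((∫ θ in Set.univ.pi (fun _ : Fin N => Is), vdm2 θ : ℝ)) : ℂ) := integral_ofReal
    rw [hdet, cast1] at this
    have h2 : (((2 * π) ^ N * (N.factorial : ℝ) * Cm.det : ℝ) : ℂ)
        = (N.factorial : ℂ) * (((2 * π : ℝ) : ℂ) ^ N * ((Cm.det : ℝ) : ℂ)) := by
      push_cast
      ring
    exact_mod_cast this.trans h2.symm
  rw [hreal]
  have h2π : ((2 * π) ^ N : ℝ) ≠ 0 := pow_ne_zero _ (by positivity)
  have hfac : (N.factorial : ℝ) ≠ 0 := Nat.cast_ne_zero.mpr N.factorial_ne_zero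
  field_simp
end

section
/- For every integer k ≥ 1, Σ_{j=1}^{2k−1} j · ln( sin²( jπ/(2k) ) ) = 2k·ln(2k) − 2k(2k−1)·ln 2. -/
open Real Finset

private lemma aux_abs_one_sub_exp (θ : ℝ) (h0 : 0 ≤ θ) (h2 : θ ≤ 2 * π) :
    ‖1 - Complex.exp (θ * Complex.I)‖ = 2 * Real.sin (θ / 2) := by
  have hs : 0 ≤ Real.sin (θ / 2) :=
    Real.sin_nonneg_of_nonneg_of_le_pi (by linarith) (by linarith)
  have hc : Real.cos θ = 2 * Real.cos (θ / 2) ^ 2 - 1 := by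
    have hcc := Real.cos_two_mul (θ / 2)
    rw [show 2 * (θ / 2) = θ by ring] at hcc
    exact hcc
  have hsq : ‖1 - Complex.exp (θ * Complex.I)‖ ^ 2
      = (2 * Real.sin (θ / 2)) ^ 2 := by
    rw [Complex.sq_norm, Complex.normSq_apply]
    simp only [Complex.sub_re, Complex.one_re, Complex.exp_ofReal_mul_I_re,
      Complex.sub_im, Complex.one_im, Complex.exp_ofReal_mul_I_im]
    nlinarith [Real.sin_sq_add_cos_sq θ, Real.sin_sq_add_cos_sq (θ / 2)]
  have h1 : ‖1 - Complex.exp (θ * Complex.I)‖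
      = Real.sqrt (‖1 - Complex.exp (θ * Complex.I)‖ ^ 2) :=
    (Real.sqrt_sq (norm_nonneg _)).symm
  rw [h1, hsq, Real.sqrt_sq (by linarith)]

private lemma aux_prod_complex (n : ℕ) (hn : 1 ≤ n) :
    ∏ j ∈ Finset.Ico 1 n, (1 - Complex.exp (2 * π * Complex.I / n) ^ j) = (n : ℂ) := by
  classical
  set ζ : ℂ := Complex.exp (2 * π * Complex.I / n) with hζdef
  have hζ : IsPrimitiveRoot ζ n := Complex.isPrimitiveRoot_exp n (by omega)
  have hpos : 0 < n := hn
  -- polynomial identity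
  have hpoly : (Polynomial.X ^ n - 1 : Polynomial ℂ)
      = ∏ η ∈ Polynomial.nthRootsFinset n (1 : ℂ), (Polynomial.X - Polynomial.C η) :=
    Polynomial.X_pow_sub_one_eq_prod hpos hζ
  -- nthRootsFinset as image of powers of ζ
  have himg : Polynomial.nthRootsFinset n (1 : ℂ) = (Finset.range n).image (ζ ^ ·) := by
    symm
    apply Finset.eq_of_subset_of_card_le
    · intro x hx
      simp only [Finset.mem_image, Finset.mem_range] at hx
      obtain ⟨j, hj, rfl⟩ := hx
      rw [Polynomial.mem_nthRootsFinset hpos, ← pow_mul, mul_comm, pow_mul, hζ.pow_eq_one,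
        one_pow]
    · rw [hζ.card_nthRootsFinset, Finset.card_image_of_injOn hζ.injOn_pow, Finset.card_range]
  have hprod_range : (Polynomial.X ^ n - 1 : Polynomial ℂ)
      = ∏ j ∈ Finset.range n, (Polynomial.X - Polynomial.C (ζ ^ j)) := by
    rw [hpoly, himg, Finset.prod_image (fun a ha b hb h => hζ.injOn_pow
      (by simpa using ha) (by simpa using hb) h)]
  have hsplit : (Polynomial.X ^ n - 1 : Polynomial ℂ)
      = (Polynomial.X - 1) * ∏ j ∈ Finset.Ico 1 n, (Polynomial.X - Polynomial.C (ζ ^ j)) := by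
    rw [hprod_range, Finset.range_eq_Ico, Finset.prod_eq_prod_Ico_succ_bot hpos]
    simp
  have hgeom : (Polynomial.X ^ n - 1 : Polynomial ℂ)
      = (Polynomial.X - 1) * ∑ i ∈ Finset.range n, Polynomial.X ^ i := by
    rw [mul_comm, geom_sum_mul]
  have hXne : (Polynomial.X - 1 : Polynomial ℂ) ≠ 0 := by
    have := Polynomial.X_sub_C_ne_zero (1 : ℂ)
    simpa using this
  have hcancel : (∑ i ∈ Finset.range n, (Polynomial.X : Polynomial ℂ) ^ i)
      = ∏ j ∈ Finset.Ico 1 n, (Polynomial.X - Polynomial.C (ζ ^ j)) :=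
    mul_left_cancel₀ hXne (hgeom.symm.trans hsplit)
  have heval := congrArg (Polynomial.eval (1 : ℂ)) hcancel
  simp only [Polynomial.eval_finset_sum, Polynomial.eval_pow, Polynomial.eval_X, one_pow,
    Finset.sum_const, Finset.card_range, nsmul_eq_mul, mul_one, Polynomial.eval_prod,
    Polynomial.eval_sub, Polynomial.eval_C] at heval
  rw [← heval]

private lemma aux_prod_real (n : ℕ) (hn : 1 ≤ n) :
    ∏ j ∈ Finset.Ico 1 n, (2 * Real.sin ((j : ℝ) * π / n)) = (n : ℝ) := by
  have h := congrArg norm (aux_prod_complex n hn)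
  rw [norm_prod, Complex.norm_natCast] at h
  refine Eq.trans ?_ h
  apply Finset.prod_congr rfl
  intro j hj
  simp only [Finset.mem_Ico] at hj
  have hn0 : (0 : ℝ) < n := by exact_mod_cast hn
  have hj1 : (1 : ℝ) ≤ j := by exact_mod_cast hj.1
  have hjn : (j : ℝ) < n := by exact_mod_cast hj.2
  have hexp : Complex.exp (2 * π * Complex.I / n) ^ j
      = Complex.exp (((2 * π * j / n : ℝ) : ℂ) * Complex.I) := by
    rw [← Complex.exp_nat_mul]
    push_cast
    ring_nf
  rw [hexp, aux_abs_one_sub_exp (2 * π * j / n)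
    (by positivity)
    (by rw [div_le_iff₀ hn0]; nlinarith [Real.pi_pos])]
  congr 1
  ring

private lemma aux_sum_log (n : ℕ) (hn : 1 ≤ n) :
    ∑ j ∈ Finset.Ico 1 n, Real.log (Real.sin ((j : ℝ) * π / n))
      = Real.log n - ((n : ℝ) - 1) * Real.log 2 := by
  have hn0 : (0 : ℝ) < n := by exact_mod_cast hn
  have hsinpos : ∀ j ∈ Finset.Ico 1 n, 0 < Real.sin ((j : ℝ) * π / n) := by
    intro j hj
    simp only [Finset.mem_Ico] at hj
    have hj1 : (1 : ℝ) ≤ j := by exact_mod_cast hj.1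
    have hjn : (j : ℝ) < n := by exact_mod_cast hj.2
    apply Real.sin_pos_of_pos_of_lt_pi
    · positivity
    · rw [div_lt_iff₀ hn0]; nlinarith [Real.pi_pos]
  have h := congrArg Real.log (aux_prod_real n hn)
  rw [Real.log_prod (fun j hj => by have := hsinpos j hj; positivity)] at h
  have hlog : ∀ j ∈ Finset.Ico 1 n, Real.log (2 * Real.sin ((j : ℝ) * π / n))
      = Real.log 2 + Real.log (Real.sin ((j : ℝ) * π / n)) :=
    fun j hj => Real.log_mul two_ne_zero (ne_of_gt (hsinpos j hj))
  rw [Finset.sum_congr rfl hlog, Finset.sum_add_distrib, Finset.sum_const, Nat.card_Ico,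
    nsmul_eq_mul] at h
  have hcast : ((n - 1 : ℕ) : ℝ) = (n : ℝ) - 1 := by
    push_cast [Nat.cast_sub hn]
    ring
  rw [hcast] at h
  linarith

/-- For every integer `k ≥ 1`,
`Σ_{j=1}^{2k−1} j ln(sin²(jπ/(2k))) = 2k ln(2k) − 2k(2k−1) ln 2`. -/
theorem stmt16 (k : ℕ) (hk : 1 ≤ k) :
    ∑ j ∈ Finset.Icc 1 (2 * k - 1), (j : ℝ) * Real.log (Real.sin ((j : ℝ) * π / (2 * k)) ^ 2)
      = 2 * (k : ℝ) * Real.log (2 * (k : ℝ))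
        - 2 * (k : ℝ) * (2 * (k : ℝ) - 1) * Real.log 2 := by
  have hn : 1 ≤ 2 * k := by omega
  have hn0 : (0 : ℝ) < 2 * (k : ℝ) := by positivity
  have hIcc : Finset.Icc 1 (2 * k - 1) = Finset.Ico 1 (2 * k) := by
    rw [← Finset.Ico_add_one_right_eq_Icc]
    congr 1
    omega
  have hsum := aux_sum_log (2 * k) hn
  push_cast at hsum
  -- Abbreviation
  set L : ℕ → ℝ := fun j => Real.log (Real.sin ((j : ℝ) * π / (2 * (k : ℝ)))) with hL
  have hsum' : ∑ j ∈ Finset.Ico 1 (2 * k), L j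
      = Real.log (2 * (k : ℝ)) - (2 * (k : ℝ) - 1) * Real.log 2 := hsum
  have hsq : ∀ j : ℕ, Real.log (Real.sin ((j : ℝ) * π / (2 * (k : ℝ))) ^ 2) = 2 * L j := by
    intro j
    rw [Real.log_pow]
    push_cast
    ring
  have hgoal1 : ∑ j ∈ Finset.Icc 1 (2 * k - 1),
        (j : ℝ) * Real.log (Real.sin ((j : ℝ) * π / (2 * (k : ℝ))) ^ 2)
      = ∑ j ∈ Finset.Ico 1 (2 * k), (j : ℝ) * (2 * L j) := by
    rw [hIcc]
    exact Finset.sum_congr rfl fun j _ => by rw [hsq]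
  -- reflection
  have hrefl : ∑ j ∈ Finset.Ico 1 (2 * k), (2 * (k : ℝ) - (j : ℝ)) * (2 * L j)
      = ∑ j ∈ Finset.Ico 1 (2 * k), (j : ℝ) * (2 * L j) := by
    apply Finset.sum_bij' (i := fun j _ => 2 * k - j) (j := fun j _ => 2 * k - j)
    · intro a ha
      simp only [Finset.mem_Ico] at ha ⊢
      omega
    · intro a ha
      simp only [Finset.mem_Ico] at ha ⊢
      omega
    · intro a ha
      simp only [Finset.mem_Ico] at ha
      omega
    · intro a ha
      simp only [Finset.mem_Ico] at ha
      omega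
    · intro a ha
      simp only [Finset.mem_Ico] at ha
      have hcast : ((2 * k - a : ℕ) : ℝ) = 2 * (k : ℝ) - (a : ℝ) := by
        push_cast [Nat.cast_sub (by omega : a ≤ 2 * k)]
        ring
      have hLa : L (2 * k - a) = L a := by
        simp only [hL, hcast]
        have harg : (2 * (k : ℝ) - (a : ℝ)) * π / (2 * (k : ℝ))
            = π - (a : ℝ) * π / (2 * (k : ℝ)) := by
          field_simp
        rw [harg, Real.sin_pi_sub]
      rw [hcast, hLa]
  have h2S : (∑ j ∈ Finset.Ico 1 (2 * k), (j : ℝ) * (2 * L j))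
        + (∑ j ∈ Finset.Ico 1 (2 * k), (j : ℝ) * (2 * L j))
      = 2 * (2 * (k : ℝ)) * ∑ j ∈ Finset.Ico 1 (2 * k), L j := by
    nth_rewrite 2 [← hrefl]
    rw [← Finset.sum_add_distrib, Finset.mul_sum]
    exact Finset.sum_congr rfl fun j _ => by ring
  have hfinal : ∑ j ∈ Finset.Ico 1 (2 * k), (j : ℝ) * (2 * L j)
      = 2 * (k : ℝ) * Real.log (2 * (k : ℝ))
        - 2 * (k : ℝ) * (2 * (k : ℝ) - 1) * Real.log 2 := by
    have := h2S
    rw [hsum'] at this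
    nlinarith [this]
  rw [hgoal1, hfinal]
end
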